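/- Let P₁ and P₂ be probability measures on a measurable space with total variation distance V, and let P̄ := (P₁ + P₂)/2. Then D(P₁||P̄) + D(P₂||P̄) ≥ (1+V)·log(1+V) + (1−V)·log(1−V), with the convention 0·log 0 = 0. -/

import Mathlib

open MeasureTheory Real
open scoped ENNReal NNReal

lemma aux_abs_mul_log_le_two {t : ℝ} (h0 : 0 ≤ t) (h2 : t ≤ 2) : |t * Real.log t| ≤ 2 := by
  rcases le_or_gt t 1 with h1 | h1
  · rcases eq_or_lt_of_le h0 with h | h
    · simp [← h]
    · have hlog : Real.log t ≤ 0 := Real.log_nonpos h0 h1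
      have hinv : Real.log t⁻¹ ≤ t⁻¹ - 1 := Real.log_le_sub_one_of_pos (inv_pos.mpr h)
      rw [Real.log_inv] at hinv
      have hti : t * t⁻¹ = 1 := mul_inv_cancel₀ h.ne'
      rw [abs_of_nonpos (mul_nonpos_of_nonneg_of_nonpos h0 hlog)]
      nlinarith [mul_le_mul_of_nonneg_left (neg_le_of_neg_le (neg_le.mpr (neg_le_neg hinv))) h0]
  · have hlog0 : 0 ≤ Real.log t := Real.log_nonneg h1.le
    have hlog : Real.log t ≤ t - 1 := Real.log_le_sub_one_of_pos (by linarith)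
    rw [abs_of_nonneg (mul_nonneg h0 hlog0)]
    nlinarith

lemma aux_sum_eq_psi {a b : ℝ} (hab : a + b = 2) :
    a * Real.log a + b * Real.log b =
      (1 + |a - 1|) * Real.log (1 + |a - 1|) + (1 - |a - 1|) * Real.log (1 - |a - 1|) := by
  rcases le_total 1 a with h | h
  · rw [abs_of_nonneg (by linarith : (0:ℝ) ≤ a - 1)]
    have e1 : 1 + (a - 1) = a := by ring
    have e2 : 1 - (a - 1) = b := by linarith
    rw [e1, e2]
  · rw [abs_of_nonpos (by linarith : a - 1 ≤ (0:ℝ))]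
    have e1 : 1 + -(a - 1) = b := by linarith
    have e2 : 1 - -(a - 1) = a := by ring
    rw [e1, e2, add_comm]

lemma aux_psi_convex : ConvexOn ℝ (Set.Icc (0:ℝ) 1)
    (fun v => (1 + v) * Real.log (1 + v) + (1 - v) * Real.log (1 - v)) := by
  have hg := Real.convexOn_mul_log
  have h1 : ConvexOn ℝ (Set.Icc (0:ℝ) 1) (fun v => (1 + v) * Real.log (1 + v)) := by
    have := (hg.comp_affineMap (AffineMap.lineMap (1:ℝ) (2:ℝ))).subset
      (fun x hx => by
        simp only [Set.mem_preimage, AffineMap.lineMap_apply_ring, Set.mem_Ici]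
        obtain ⟨hx0, hx1⟩ := hx; nlinarith) (convex_Icc 0 1)
    convert this using 1
    any_goals rfl
    funext v
    simp only [Function.comp_apply, AffineMap.lineMap_apply_ring]
    ring_nf
  have h2 : ConvexOn ℝ (Set.Icc (0:ℝ) 1) (fun v => (1 - v) * Real.log (1 - v)) := by
    have := (hg.comp_affineMap (AffineMap.lineMap (1:ℝ) (0:ℝ))).subset
      (fun x hx => by
        simp only [Set.mem_preimage, AffineMap.lineMap_apply_ring, Set.mem_Ici]
        obtain ⟨hx0, hx1⟩ := hx; nlinarith) (convex_Icc 0 1)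
    convert this using 1
    any_goals rfl
    funext v
    simp only [Function.comp_apply, AffineMap.lineMap_apply_ring]
    ring_nf
  exact h1.add h2

lemma aux_psi_cont : Continuous
    (fun v : ℝ => (1 + v) * Real.log (1 + v) + (1 - v) * Real.log (1 - v)) := by
  have h := Real.continuous_mul_log
  exact ((h.comp (continuous_const.add continuous_id)).add
    (h.comp (continuous_const.sub continuous_id)))


/-- The Kullback-Leibler divergence `D(P‖Q) = ∫ (dP/dQ) log(dP/dQ) dQ` (real-valued;
meaningful when `P ≪ Q` and the integrand is integrable, in which case it agrees with the
usual definition). -/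
noncomputable def klDivR {X : Type*} [MeasurableSpace X] (P Q : Measure X) : ℝ :=
  ∫ x, ((P.rnDeriv Q x).toReal) * Real.log ((P.rnDeriv Q x).toReal) ∂Q

/-- Topsøe's inequality: for probability measures `P₁, P₂` with total
variation distance `V` and `P̄ = (P₁+P₂)/2`,
`D(P₁‖P̄) + D(P₂‖P̄) ≥ (1+V) log(1+V) + (1-V) log(1-V)`.
(`Real.log 0 = 0` implements the convention `0 log 0 = 0`.) -/
theorem statement7 {X : Type*} [MeasurableSpace X] (μ : Measure X) [SigmaFinite μ]
    (p₁ p₂ : X → ℝ) (h₁m : Measurable p₁) (h₂m : Measurable p₂)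
    (h₁0 : ∀ x, 0 ≤ p₁ x) (h₂0 : ∀ x, 0 ≤ p₂ x)
    (P₁ P₂ : Measure X)
    (hP₁ : P₁ = μ.withDensity fun x => ENNReal.ofReal (p₁ x))
    (hP₂ : P₂ = μ.withDensity fun x => ENNReal.ofReal (p₂ x))
    [IsProbabilityMeasure P₁] [IsProbabilityMeasure P₂]
    (V : ℝ) (hV : V = 2⁻¹ * ∫ x, |p₁ x - p₂ x| ∂μ)
    (Pbar : Measure X) (hPbar : Pbar = (2 : ℝ≥0∞)⁻¹ • (P₁ + P₂)) :
    (1 + V) * Real.log (1 + V) + (1 - V) * Real.log (1 - V) ≤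
      klDivR P₁ Pbar + klDivR P₂ Pbar := by
  classical
  -- abbreviations
  let s : X → ℝ := fun x => (p₁ x + p₂ x) / 2
  let q : X → ℝ≥0∞ := fun x => ENNReal.ofReal (s x)
  have hsm : Measurable s := (h₁m.add h₂m).div_const 2
  have hqm : Measurable q := ENNReal.measurable_ofReal.comp hsm
  have hs0 : ∀ x, 0 ≤ s x := fun x => div_nonneg (add_nonneg (h₁0 x) (h₂0 x)) (by norm_num)
  -- Pbar as a density measure
  have hPbarD : Pbar = μ.withDensity q := by
    rw [hPbar, hP₁, hP₂]
    have hqe : q = (2:ℝ≥0∞)⁻¹ • ((fun x => ENNReal.ofReal (p₁ x)) +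
        fun x => ENNReal.ofReal (p₂ x)) := by
      funext x
      simp only [Pi.smul_apply, Pi.add_apply, smul_eq_mul, q, s]
      rw [← ENNReal.ofReal_add (h₁0 x) (h₂0 x),
        show (p₁ x + p₂ x) / 2 = 2⁻¹ * (p₁ x + p₂ x) by ring,
        ENNReal.ofReal_mul (by norm_num : (0:ℝ) ≤ 2⁻¹)]
      congr 1
      rw [ENNReal.ofReal_inv_of_pos (by norm_num : (0:ℝ) < 2)]
      norm_num
    rw [hqe, withDensity_smul' _ _ (by norm_num),
      withDensity_add_left h₁m.ennreal_ofReal]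
  haveI hPbarProb : IsProbabilityMeasure Pbar := by
    constructor
    rw [hPbar, Measure.smul_apply, Measure.add_apply, measure_univ, measure_univ,
      smul_eq_mul, one_add_one_eq_two]
    exact ENNReal.inv_mul_cancel (by norm_num) (by norm_num)
  -- absolute continuity
  have hle : P₁ + P₂ = (2:ℝ≥0∞) • Pbar := by
    rw [hPbar, smul_smul, ENNReal.mul_inv_cancel (by norm_num) (by norm_num), one_smul]
  have hac₁ : P₁ ≪ Pbar :=
    (Measure.absolutelyContinuous_of_le
      (le_trans (Measure.le_add_right le_rfl) hle.le)).trans Measure.smul_absolutelyContinuous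
  have hac₂ : P₂ ≪ Pbar :=
    (Measure.absolutelyContinuous_of_le
      (le_trans (Measure.le_add_left le_rfl) hle.le)).trans Measure.smul_absolutelyContinuous
  have hacμ : Pbar ≪ μ := hPbarD ▸ withDensity_absolutelyContinuous μ q
  -- key density identities
  have key : ∀ (P : Measure X) (p : X → ℝ), Measurable p → SigmaFinite P →
      P = μ.withDensity (fun x => ENNReal.ofReal (p x)) → P ≪ Pbar →
      (fun x => q x * P.rnDeriv Pbar x) =ᵐ[μ] fun x => ENNReal.ofReal (p x) := by
    intro P p hpm hPsf hP hac
    haveI := hPsf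
    refine (withDensity_eq_iff_of_sigmaFinite
      ((hqm.mul (Measure.measurable_rnDeriv P Pbar)).aemeasurable)
      (ENNReal.measurable_ofReal.comp hpm).aemeasurable).mp ?_
    calc μ.withDensity (fun x => q x * P.rnDeriv Pbar x)
        = (μ.withDensity q).withDensity (P.rnDeriv Pbar) :=
          withDensity_mul μ hqm (Measure.measurable_rnDeriv P Pbar)
      _ = Pbar.withDensity (P.rnDeriv Pbar) := by rw [← hPbarD]
      _ = P := Measure.withDensity_rnDeriv_eq P Pbar hac
      _ = μ.withDensity (fun x => ENNReal.ofReal (p x)) := hP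
  have hkey₁ : ∀ᵐ x ∂μ, s x * (P₁.rnDeriv Pbar x).toReal = p₁ x := by
    filter_upwards [key P₁ p₁ h₁m inferInstance hP₁ hac₁] with x hx
    have h := congrArg ENNReal.toReal hx
    rwa [ENNReal.toReal_mul, ENNReal.toReal_ofReal (hs0 x), ENNReal.toReal_ofReal (h₁0 x)] at h
  have hkey₂ : ∀ᵐ x ∂μ, s x * (P₂.rnDeriv Pbar x).toReal = p₂ x := by
    filter_upwards [key P₂ p₂ h₂m inferInstance hP₂ hac₂] with x hx
    have h := congrArg ENNReal.toReal hx
    rwa [ENNReal.toReal_mul, ENNReal.toReal_ofReal (hs0 x), ENNReal.toReal_ofReal (h₂0 x)] at h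
  -- s is a.e. positive w.r.t. Pbar
  have hsne : ∀ᵐ x ∂Pbar, s x ≠ 0 := by
    rw [ae_iff]
    simp only [ne_eq, not_not]
    have hms : MeasurableSet {x | s x = 0} := hsm (measurableSet_singleton 0)
    rw [hPbarD, withDensity_apply _ hms]
    have h0 : ∫⁻ x in {x | s x = 0}, q x ∂μ = ∫⁻ _x in {x | s x = 0}, 0 ∂μ := by
      refine setLIntegral_congr_fun hms (fun x hx => ?_)
      simp only [q]
      rw [Set.mem_setOf_eq.mp hx]
      simp
    rw [h0, lintegral_zero]
  -- a.e. facts w.r.t. Pbar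
  have hsum : ∀ᵐ x ∂Pbar,
      (P₁.rnDeriv Pbar x).toReal + (P₂.rnDeriv Pbar x).toReal = 2 := by
    filter_upwards [hkey₁.filter_mono hacμ.ae_le, hkey₂.filter_mono hacμ.ae_le, hsne]
      with x h1 h2 hsx
    have hsx' : 0 < s x := lt_of_le_of_ne (hs0 x) (Ne.symm hsx)
    have hmul : s x * ((P₁.rnDeriv Pbar x).toReal + (P₂.rnDeriv Pbar x).toReal) = s x * 2 := by
      rw [mul_add, h1, h2]
      show p₁ x + p₂ x = (p₁ x + p₂ x) / 2 * 2
      ring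
    exact mul_left_cancel₀ hsx'.ne' hmul
  have hmemI : ∀ᵐ x ∂Pbar, |(P₁.rnDeriv Pbar x).toReal - 1| ∈ Set.Icc (0:ℝ) 1 := by
    filter_upwards [hsum] with x hx
    have h1 : 0 ≤ (P₁.rnDeriv Pbar x).toReal := ENNReal.toReal_nonneg
    have h2 : 0 ≤ (P₂.rnDeriv Pbar x).toReal := ENNReal.toReal_nonneg
    exact ⟨abs_nonneg _, abs_le.mpr ⟨by linarith, by linarith⟩⟩
  -- integrability
  have hr₁m : Measurable fun x => (P₁.rnDeriv Pbar x).toReal :=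
    (Measure.measurable_rnDeriv P₁ Pbar).ennreal_toReal
  have hr₂m : Measurable fun x => (P₂.rnDeriv Pbar x).toReal :=
    (Measure.measurable_rnDeriv P₂ Pbar).ennreal_toReal
  have hint₁ : Integrable (fun x =>
      (P₁.rnDeriv Pbar x).toReal * Real.log ((P₁.rnDeriv Pbar x).toReal)) Pbar := by
    refine Integrable.mono' (integrable_const 2)
      (Real.continuous_mul_log.measurable.comp hr₁m).aestronglyMeasurable ?_
    filter_upwards [hsum] with x hx
    rw [Real.norm_eq_abs]
    exact aux_abs_mul_log_le_two ENNReal.toReal_nonneg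
      (by nlinarith [ENNReal.toReal_nonneg (a := P₂.rnDeriv Pbar x)])
  have hint₂ : Integrable (fun x =>
      (P₂.rnDeriv Pbar x).toReal * Real.log ((P₂.rnDeriv Pbar x).toReal)) Pbar := by
    refine Integrable.mono' (integrable_const 2)
      (Real.continuous_mul_log.measurable.comp hr₂m).aestronglyMeasurable ?_
    filter_upwards [hsum] with x hx
    rw [Real.norm_eq_abs]
    exact aux_abs_mul_log_le_two ENNReal.toReal_nonneg
      (by nlinarith [ENNReal.toReal_nonneg (a := P₁.rnDeriv Pbar x)])
  have hfm : Measurable fun x => |(P₁.rnDeriv Pbar x).toReal - 1| :=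
    (hr₁m.sub measurable_const).abs
  have hfi : Integrable (fun x => |(P₁.rnDeriv Pbar x).toReal - 1|) Pbar := by
    refine Integrable.mono' (integrable_const 1) hfm.aestronglyMeasurable ?_
    filter_upwards [hmemI] with x hx
    rw [Real.norm_eq_abs, abs_abs]
    exact hx.2
  have hgi : Integrable ((fun v => (1 + v) * Real.log (1 + v) + (1 - v) * Real.log (1 - v)) ∘
      fun x => |(P₁.rnDeriv Pbar x).toReal - 1|) Pbar := by
    refine Integrable.mono' (integrable_const 4)
      (aux_psi_cont.measurable.comp hfm).aestronglyMeasurable ?_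
    filter_upwards [hmemI] with x hx
    obtain ⟨h0, h1⟩ := hx
    rw [Real.norm_eq_abs]
    refine le_trans (abs_add_le _ _) ?_
    have b1 := aux_abs_mul_log_le_two (t := 1 + |(P₁.rnDeriv Pbar x).toReal - 1|)
      (by linarith) (by linarith)
    have b2 := aux_abs_mul_log_le_two (t := 1 - |(P₁.rnDeriv Pbar x).toReal - 1|)
      (by linarith) (by linarith)
    linarith
  -- the integral of |r₁ - 1| over Pbar is V
  have hstep : ∀ f : X → ℝ, ∫ x, f x ∂Pbar = ∫ x, Real.toNNReal (s x) • f x ∂μ := by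
    intro f
    rw [hPbarD]
    exact integral_withDensity_eq_integral_smul hsm.real_toNNReal f
  have hVeq : ∫ x, |(P₁.rnDeriv Pbar x).toReal - 1| ∂Pbar = V := by
    rw [hstep]
    calc ∫ x, Real.toNNReal (s x) • |(P₁.rnDeriv Pbar x).toReal - 1| ∂μ
        = ∫ x, 2⁻¹ * |p₁ x - p₂ x| ∂μ := by
          refine integral_congr_ae ?_
          filter_upwards [hkey₁] with x h1
          calc Real.toNNReal (s x) • |(P₁.rnDeriv Pbar x).toReal - 1|
              = s x * |(P₁.rnDeriv Pbar x).toReal - 1| := by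
                rw [NNReal.smul_def, Real.coe_toNNReal _ (hs0 x), smul_eq_mul]
            _ = |s x * ((P₁.rnDeriv Pbar x).toReal - 1)| := by
                rw [abs_mul, abs_of_nonneg (hs0 x)]
            _ = |p₁ x - s x| := by rw [mul_sub, h1, mul_one]
            _ = 2⁻¹ * |p₁ x - p₂ x| := by
                rw [show p₁ x - s x = 2⁻¹ * (p₁ x - p₂ x) by
                  show p₁ x - (p₁ x + p₂ x)/2 = _; ring]
                rw [abs_mul]
                norm_num
      _ = V := by rw [hV, integral_const_mul]
  -- rewrite the sum of KL divergences
  have hsumint : klDivR P₁ Pbar + klDivR P₂ Pbar =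
      ∫ x, (1 + |(P₁.rnDeriv Pbar x).toReal - 1|) *
          Real.log (1 + |(P₁.rnDeriv Pbar x).toReal - 1|) +
        (1 - |(P₁.rnDeriv Pbar x).toReal - 1|) *
          Real.log (1 - |(P₁.rnDeriv Pbar x).toReal - 1|) ∂Pbar := by
    rw [klDivR, klDivR, ← integral_add hint₁ hint₂]
    refine integral_congr_ae ?_
    filter_upwards [hsum] with x hx
    exact aux_sum_eq_psi hx
  -- Jensen
  have hjen := aux_psi_convex.map_integral_le aux_psi_cont.continuousOn isClosed_Icc
    hmemI hfi hgi
  rw [hVeq] at hjen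
  rw [hsumint]
  simpa using hjen
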